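/- Let σ, η > 0. The function u(x) = 6η²/(σ²·x²) is the unique nonnegative, twice continuously differentiable function u : (0,∞) → ℝ satisfying u''(x) = (σ²/η²)·u(x)² for all x > 0, lim_{x→0+} u(x) = ∞, and lim_{x→∞} u(x) = 0. -/

import Mathlib

open Filter Real Set MeasureTheory ProbabilityTheory

private lemma constantOn {f : ℝ → ℝ} {S : Set ℝ} (hS : Convex ℝ S)
    (hf : ∀ x ∈ S, HasDerivAt f 0 x) : ∀ x ∈ S, ∀ y ∈ S, f x = f y := by
  have hc : ContinuousOn f S := fun x hx =>
    ((hf x hx).differentiableAt.continuousAt).continuousWithinAt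
  have hd : DifferentiableOn ℝ f (interior S) := fun x hx =>
    ((hf x (interior_subset hx)).differentiableAt).differentiableWithinAt
  have h0 : ∀ x ∈ interior S, deriv f x = 0 := fun x hx => (hf x (interior_subset hx)).deriv
  have m := monotoneOn_of_deriv_nonneg hS hc hd fun x hx => (h0 x hx).ge
  have a := antitoneOn_of_deriv_nonpos hS hc hd fun x hx => (h0 x hx).le
  intro x hx y hy
  rcases le_total x y with h | h
  · exact le_antisymm (m hx hy h) (a hx hy h)
  · exact (le_antisymm (m hy hx h) (a hy hx h)).symm

private lemma sqrt_tendsto_atTop : Tendsto Real.sqrt atTop atTop := by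
  refine tendsto_atTop_atTop.2 fun b => ⟨b ^ 2, fun a ha => ?_⟩
  calc b ≤ |b| := le_abs_self b
  _ = Real.sqrt (b ^ 2) := (Real.sqrt_sq_eq_abs b).symm
  _ ≤ Real.sqrt a := Real.sqrt_le_sqrt ha

private lemma ode_uniq (c : ℝ) (hc : 0 < c) (ψ : ℝ → ℝ)
    (hnn : ∀ x : ℝ, 0 < x → 0 ≤ ψ x)
    (hsm : ContDiffOn ℝ 2 ψ (Set.Ioi 0))
    (hode : ∀ x : ℝ, 0 < x → deriv (deriv ψ) x = c * ψ x ^ 2)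
    (h0 : Tendsto ψ (nhdsWithin 0 (Set.Ioi 0)) atTop)
    (hinf : Tendsto ψ atTop (nhds 0)) :
    ∀ x : ℝ, 0 < x → ψ x = 6 / (c * x ^ 2) := by
  have hψdiffOn : DifferentiableOn ℝ ψ (Ioi 0) := hsm.differentiableOn (by norm_num)
  set φ := deriv ψ with hφdef
  have hψderiv : ∀ x ∈ Ioi (0:ℝ), HasDerivAt ψ (φ x) x := fun x hx =>
    (hψdiffOn.differentiableAt (isOpen_Ioi.mem_nhds hx)).hasDerivAt
  have hψcont : ContinuousOn ψ (Ioi 0) := hsm.continuousOn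
  have hφC1 : ContDiffOn ℝ 1 φ (Ioi 0) := hsm.deriv_of_isOpen isOpen_Ioi (by norm_num)
  have hφdiffOn : DifferentiableOn ℝ φ (Ioi 0) := hφC1.differentiableOn (by norm_num)
  have hφcont : ContinuousOn φ (Ioi 0) := hφC1.continuousOn
  have hφderiv : ∀ x ∈ Ioi (0:ℝ), HasDerivAt φ (c * ψ x ^ 2) x := by
    intro x hx
    have h := (hφdiffOn.differentiableAt (isOpen_Ioi.mem_nhds hx)).hasDerivAt
    rwa [hode x hx] at h
  -- φ is monotone on (0, ∞)
  have hφmono : MonotoneOn φ (Ioi 0) := by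
    refine monotoneOn_of_deriv_nonneg (convex_Ioi 0) hφcont
      (fun x hx => ?_) (fun x hx => ?_)
    · rw [interior_Ioi] at hx
      exact (hφderiv x hx).differentiableAt.differentiableWithinAt
    · rw [interior_Ioi] at hx
      rw [(hφderiv x hx).deriv]
      positivity
  -- φ ≤ 0 on (0, ∞)
  have hφle : ∀ x ∈ Ioi (0:ℝ), φ x ≤ 0 := by
    intro x₀ hx₀
    by_contra hgt
    push_neg at hgt
    have hsub : Ici x₀ ⊆ Ioi (0:ℝ) := fun y hy => mem_Ioi.2 (lt_of_lt_of_le (mem_Ioi.1 hx₀) (mem_Ici.1 hy))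
    have hder : ∀ x, x₀ < x → HasDerivAt (fun x => ψ x - φ x₀ * x) (φ x - φ x₀) x := by
      intro x hx
      have h2 : HasDerivAt (fun y : ℝ => φ x₀ * y) (φ x₀) x := by
        simpa using (hasDerivAt_id x).const_mul (φ x₀)
      exact (hψderiv x (hsub (le_of_lt hx))).sub h2
    have hmono : MonotoneOn (fun x => ψ x - φ x₀ * x) (Ici x₀) := by
      refine monotoneOn_of_deriv_nonneg (convex_Ici x₀)
        ((hψcont.mono hsub).sub ((continuous_const.mul continuous_id).continuousOn))
        (fun x hx => ?_) (fun x hx => ?_)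
      all_goals rw [interior_Ici] at hx
      · exact (hder x hx).differentiableAt.differentiableWithinAt
      · rw [(hder x hx).deriv, sub_nonneg]
        exact hφmono hx₀ (hsub (mem_Ici.2 (le_of_lt hx))) (le_of_lt hx)
    have hlin : Tendsto (fun x => φ x₀ * x + (ψ x₀ - φ x₀ * x₀)) atTop atTop :=
      (tendsto_id.const_mul_atTop hgt).atTop_add tendsto_const_nhds
    have hψtop : Tendsto ψ atTop atTop := by
      refine tendsto_atTop_mono' atTop ?_ hlin
      filter_upwards [eventually_ge_atTop x₀] with x hx
      have := hmono self_mem_Ici hx hx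
      simp only at this
      linarith
    exact not_tendsto_atTop_of_tendsto_nhds hinf hψtop
  -- energy function is constant
  have hE : ∀ x ∈ Ioi (0:ℝ), HasDerivAt (fun t => φ t ^ 2 - 2 * c / 3 * ψ t ^ 3) 0 x := by
    intro x hx
    have h1 := (hφderiv x hx).pow 2
    have h2 := ((hψderiv x hx).pow 3).const_mul (2 * c / 3)
    have h3 := h1.sub h2
    convert h3 using 1
    · rfl
    · rfl
    · rfl
    push_cast
    ring
  obtain ⟨K, hKdef⟩ : ∃ K : ℝ, K = φ 1 ^ 2 - 2 * c / 3 * ψ 1 ^ 3 := ⟨_, rfl⟩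
  have hEK : ∀ x ∈ Ioi (0:ℝ), φ x ^ 2 - 2 * c / 3 * ψ x ^ 3 = K := fun x hx =>
    (constantOn (convex_Ioi 0) hE x hx 1 (mem_Ioi.2 one_pos)).trans hKdef.symm
  have htend : Tendsto (fun x => φ x ^ 2) atTop (nhds K) := by
    have h1 : Tendsto (fun x => K + 2 * c / 3 * ψ x ^ 3) atTop (nhds (K + 2 * c / 3 * 0 ^ 3)) :=
      tendsto_const_nhds.add ((hinf.pow 3).const_mul (2 * c / 3))
    norm_num at h1
    refine h1.congr' ?_
    filter_upwards [eventually_gt_atTop (0:ℝ)] with x hx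
    have := hEK x hx
    linarith
  have hK0 : 0 ≤ K := ge_of_tendsto htend (Eventually.of_forall fun x => sq_nonneg _)
  have hKzero : K = 0 := by
    by_contra hKne
    have hKpos : 0 < K := lt_of_le_of_ne hK0 (Ne.symm hKne)
    obtain ⟨s, hsdef⟩ : ∃ s : ℝ, s = Real.sqrt (K / 2) := ⟨_, rfl⟩
    have hs : 0 < s := hsdef ▸ Real.sqrt_pos.2 (by linarith)
    have hs2 : s ^ 2 = K / 2 := hsdef ▸ Real.sq_sqrt (by linarith)
    obtain ⟨X₀, hX₀⟩ := eventually_atTop.1 (htend.eventually_const_lt (show K / 2 < K by linarith))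
    obtain ⟨X, hXdef⟩ : ∃ X : ℝ, X = max X₀ 1 := ⟨_, rfl⟩
    have hX1 : (0:ℝ) < X := hXdef ▸ lt_of_lt_of_le one_pos (le_max_right _ _)
    have hsubX : Ici X ⊆ Ioi (0:ℝ) := fun y hy => lt_of_lt_of_le hX1 hy
    have hφs : ∀ x, X ≤ x → φ x ≤ -s := by
      intro x hx
      have hx0 : (0:ℝ) < x := lt_of_lt_of_le hX1 hx
      have h2 : K / 2 < φ x ^ 2 := hX₀ x (le_trans (hXdef ▸ le_max_left _ _) hx)
      have h3 : φ x ≤ 0 := hφle x hx0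
      nlinarith
    have hder : ∀ x, X < x → HasDerivAt (fun x => ψ x + s * x) (φ x + s) x := by
      intro x hx
      have h2 : HasDerivAt (fun y : ℝ => s * y) s x := by
        simpa using (hasDerivAt_id x).const_mul s
      exact (hψderiv x (hsubX (le_of_lt hx))).add h2
    have hanti : AntitoneOn (fun x => ψ x + s * x) (Ici X) := by
      refine antitoneOn_of_deriv_nonpos (convex_Ici X)
        ((hψcont.mono hsubX).add (continuous_const.mul continuous_id).continuousOn)
        (fun x hx => ?_) (fun x hx => ?_)
      all_goals rw [interior_Ici] at hx
      · exact (hder x hx).differentiableAt.differentiableWithinAt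
      · rw [(hder x hx).deriv]
        have := hφs x (le_of_lt hx)
        linarith
    obtain ⟨x₁, hx₁def⟩ : ∃ x₁ : ℝ, x₁ = X + ψ X / s + 1 := ⟨_, rfl⟩
    have hdiv : 0 ≤ ψ X / s := div_nonneg (hnn X hX1) hs.le
    have hx₁ : X ≤ x₁ := by rw [hx₁def]; linarith
    have h4 : ψ x₁ + s * x₁ ≤ ψ X + s * X := hanti self_mem_Ici hx₁ hx₁
    have h5 : 0 ≤ ψ x₁ := hnn x₁ (by linarith)
    have h6 : s * x₁ = s * X + ψ X + s := by
      rw [hx₁def]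
      field_simp
    linarith
  have hE0 : ∀ x ∈ Ioi (0:ℝ), φ x ^ 2 = 2 * c / 3 * ψ x ^ 3 := by
    intro x hx
    have := hEK x hx
    rw [hKzero] at this
    linarith
  -- derivative of (sqrt ψ)⁻¹
  obtain ⟨k, hkdef⟩ : ∃ k : ℝ, k = Real.sqrt (c / 6) := ⟨_, rfl⟩
  have hk : 0 < k := hkdef ▸ Real.sqrt_pos.2 (by linarith)
  have hk2 : k ^ 2 = c / 6 := hkdef ▸ Real.sq_sqrt (by linarith)
  have hφeq : ∀ x ∈ Ioi (0:ℝ), 0 < ψ x → φ x = -(2 * k * Real.sqrt (ψ x) ^ 3) := by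
    intro x hx hpos
    have ha : 0 < Real.sqrt (ψ x) := Real.sqrt_pos.2 hpos
    have ha2 : Real.sqrt (ψ x) ^ 2 = ψ x := Real.sq_sqrt hpos.le
    have h1 : φ x ^ 2 = (2 * k * Real.sqrt (ψ x) ^ 3) ^ 2 := by
      have h' := hE0 x hx
      have : (2 * k * Real.sqrt (ψ x) ^ 3) ^ 2
          = 4 * k ^ 2 * (Real.sqrt (ψ x) ^ 2) ^ 3 := by ring
      rw [this, hk2, ha2]
      linarith
    have h2 : φ x ≤ 0 := hφle x hx
    have hB : 0 < 2 * k * Real.sqrt (ψ x) ^ 3 := by positivity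
    have h4 : (φ x + 2 * k * Real.sqrt (ψ x) ^ 3) * (φ x - 2 * k * Real.sqrt (ψ x) ^ 3) = 0 := by
      linear_combination h1
    rcases mul_eq_zero.1 h4 with h5 | h5
    · linarith
    · linarith
  have hw : ∀ x ∈ Ioi (0:ℝ), 0 < ψ x →
      HasDerivAt (fun t => (Real.sqrt (ψ t))⁻¹) k x := by
    intro x hx hpos
    have ha : 0 < Real.sqrt (ψ x) := Real.sqrt_pos.2 hpos
    have ha2 : Real.sqrt (ψ x) ^ 2 = ψ x := Real.sq_sqrt hpos.le
    have h1 := ((hψderiv x hx).sqrt (ne_of_gt hpos)).inv (ne_of_gt ha)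
    convert h1 using 1
    · rfl
    · rfl
    · rfl
    rw [hφeq x hx hpos]
    rw [ha2]
    field_simp
    linear_combination (-1:ℝ) * ha2
  -- positivity of ψ
  have hpos : ∀ x ∈ Ioi (0:ℝ), 0 < ψ x := by
    by_contra hcon
    push_neg at hcon
    obtain ⟨x₀, hx₀, hψx₀'⟩ := hcon
    have hψx₀ : ψ x₀ = 0 := le_antisymm hψx₀' (hnn x₀ hx₀)
    have h1 : ∀ᶠ x in nhdsWithin 0 (Ioi 0), 1 < ψ x := h0.eventually (eventually_gt_atTop 1)
    obtain ⟨ε, hε, hεsub⟩ := mem_nhdsGT_iff_exists_Ioo_subset.1 h1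
    rw [mem_Ioi] at hε
    have hεx₀ : ε ≤ x₀ := by
      by_contra hlt
      push_neg at hlt
      have := hεsub ⟨hx₀, hlt⟩
      simp only [Set.mem_setOf_eq] at this
      linarith
    obtain ⟨Z, hZdef⟩ : ∃ Z : Set ℝ, Z = Icc ε x₀ ∩ ψ ⁻¹' {0} := ⟨_, rfl⟩
    have hZne : x₀ ∈ Z := hZdef ▸ ⟨⟨hεx₀, le_refl _⟩, hψx₀⟩
    have hZclosed : IsClosed Z := hZdef ▸
      (hψcont.mono (fun y hy => lt_of_lt_of_le hε hy.1)).preimage_isClosed_of_isClosed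
        isClosed_Icc isClosed_singleton
    have hZbdd : BddBelow Z := ⟨ε, fun z hz => (hZdef ▸ hz : z ∈ Icc ε x₀ ∩ ψ ⁻¹' {0}).1.1⟩
    obtain ⟨a, hadef⟩ : ∃ a : ℝ, a = sInf Z := ⟨_, rfl⟩
    have haZ : a ∈ Icc ε x₀ ∩ ψ ⁻¹' {0} := by
      rw [← hZdef]
      exact hadef ▸ hZclosed.csInf_mem ⟨x₀, hZne⟩ hZbdd
    have ha : 0 < a := lt_of_lt_of_le hε haZ.1.1
    have hψa : ψ a = 0 := haZ.2
    have hpos' : ∀ x ∈ Ioo (0:ℝ) a, 0 < ψ x := by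
      intro x hx
      rcases lt_or_ge x ε with hxe | hxe
      · have := hεsub ⟨hx.1, hxe⟩
        simp only [Set.mem_setOf_eq] at this
        linarith
      · by_contra hle
        push_neg at hle
        have hx0 : ψ x = 0 := le_antisymm hle (hnn x hx.1)
        have hxZ : x ∈ Z := hZdef ▸ ⟨⟨hxe, le_trans hx.2.le haZ.1.2⟩, hx0⟩
        have h7 := csInf_le hZbdd hxZ
        rw [← hadef] at h7
        linarith [hx.2]
    have hF : ∀ x ∈ Ioo (0:ℝ) a, HasDerivAt (fun t => (Real.sqrt (ψ t))⁻¹ - k * t) 0 x := by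
      intro x hx
      have h2 : HasDerivAt (fun y : ℝ => k * y) k x := by
        simpa using (hasDerivAt_id x).const_mul k
      have h3 := (hw x (mem_Ioi.2 hx.1) (hpos' x hx)).sub h2
      rw [sub_self] at h3
      exact h3
    have hFconst := constantOn (convex_Ioo 0 a) hF
    obtain ⟨C, hCdef⟩ : ∃ C : ℝ, C = (Real.sqrt (ψ (a / 2)))⁻¹ - k * (a / 2) := ⟨_, rfl⟩
    have hm : a / 2 ∈ Ioo (0:ℝ) a := ⟨by linarith, by linarith⟩
    have hlin : ∀ x ∈ Ioo (0:ℝ) a, (Real.sqrt (ψ x))⁻¹ = k * x + C := by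
      intro x hx
      have h8 := hFconst x hx (a / 2) hm
      rw [hCdef]
      linarith
    have hne : (nhdsWithin a (Ioo (0:ℝ) a)).NeBot := right_nhdsWithin_Ioo_neBot ha
    have hψtend : Tendsto ψ (nhdsWithin a (Ioo (0:ℝ) a)) (nhds 0) := by
      have hca : ContinuousAt ψ a := hψcont.continuousAt (isOpen_Ioi.mem_nhds ha)
      have := hca.tendsto.mono_left
        (nhdsWithin_le_nhds : nhdsWithin a (Ioo (0:ℝ) a) ≤ nhds a)
      rwa [hψa] at this
    have hsqtend : Tendsto (fun x => Real.sqrt (ψ x)) (nhdsWithin a (Ioo (0:ℝ) a))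
        (nhdsWithin 0 (Ioi 0)) := by
      rw [tendsto_nhdsWithin_iff]
      constructor
      · have := (Real.continuous_sqrt.tendsto 0).comp hψtend
        simpa [Function.comp_def] using this
      · filter_upwards [eventually_mem_nhdsWithin] with x hx
        exact Real.sqrt_pos.2 (hpos' x hx)
    have hwtop : Tendsto (fun x => (Real.sqrt (ψ x))⁻¹) (nhdsWithin a (Ioo (0:ℝ) a)) atTop :=
      tendsto_inv_nhdsGT_zero.comp hsqtend
    have hwnhds : Tendsto (fun x => (Real.sqrt (ψ x))⁻¹) (nhdsWithin a (Ioo (0:ℝ) a))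
        (nhds (k * a + C)) := by
      refine Tendsto.congr' ?_ (((continuous_const.mul continuous_id).add
        continuous_const).tendsto a |>.mono_left nhdsWithin_le_nhds)
      filter_upwards [eventually_mem_nhdsWithin] with x hx
      exact (hlin x hx).symm
    exact not_tendsto_atTop_of_tendsto_nhds hwnhds hwtop
  -- final computation
  have hF : ∀ x ∈ Ioi (0:ℝ), HasDerivAt (fun t => (Real.sqrt (ψ t))⁻¹ - k * t) 0 x := by
    intro x hx
    have h2 : HasDerivAt (fun y : ℝ => k * y) k x := by
      simpa using (hasDerivAt_id x).const_mul k
    have h3 := (hw x hx (hpos x hx)).sub h2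
    rw [sub_self] at h3
    exact h3
  have hFconst := constantOn (convex_Ioi 0) hF
  obtain ⟨C, hCdef⟩ : ∃ C : ℝ, C = (Real.sqrt (ψ 1))⁻¹ - k * 1 := ⟨_, rfl⟩
  have hlin : ∀ x ∈ Ioi (0:ℝ), (Real.sqrt (ψ x))⁻¹ = k * x + C := by
    intro x hx
    have h8 := hFconst x hx 1 (mem_Ioi.2 one_pos)
    rw [hCdef]
    linarith
  have hC0 : C = 0 := by
    have hwtend : Tendsto (fun x => (Real.sqrt (ψ x))⁻¹) (nhdsWithin 0 (Ioi 0)) (nhds 0) :=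
      tendsto_inv_atTop_zero.comp (sqrt_tendsto_atTop.comp h0)
    have hltend : Tendsto (fun x => (Real.sqrt (ψ x))⁻¹) (nhdsWithin 0 (Ioi 0))
        (nhds (k * 0 + C)) := by
      refine Tendsto.congr' ?_ (((continuous_const.mul continuous_id).add
        continuous_const).tendsto 0 |>.mono_left nhdsWithin_le_nhds)
      filter_upwards [eventually_mem_nhdsWithin] with x hx
      exact (hlin x hx).symm
    have := tendsto_nhds_unique hltend hwtend
    linarith
  intro x hx
  have hx' : x ∈ Ioi (0:ℝ) := mem_Ioi.2 hx
  have h1 : (Real.sqrt (ψ x))⁻¹ = k * x := by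
    have := hlin x hx'
    rw [hC0] at this
    linarith
  have h2 : Real.sqrt (ψ x) = (k * x)⁻¹ := by
    rw [← h1, inv_inv]
  have h3 : ψ x = ((k * x)⁻¹) ^ 2 := by
    rw [← h2, Real.sq_sqrt (hnn x hx)]
  have hcne : c ≠ 0 := ne_of_gt hc
  have hxne : x ≠ 0 := ne_of_gt hx
  rw [h3, inv_pow, mul_pow, hk2, div_mul_eq_mul_div, inv_div]


private lemma u_hasDeriv (σ η : ℝ) (x : ℝ) (hσ : 0 < σ) (hx : x ≠ 0) :
    HasDerivAt (fun z : ℝ => 6 * η ^ 2 / (σ ^ 2 * z ^ 2)) (-12 * η ^ 2 / (σ ^ 2 * x ^ 3)) x := by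
  have hd : HasDerivAt (fun z : ℝ => σ ^ 2 * z ^ 2) (σ ^ 2 * (2 * x)) x := by
    simpa using (hasDerivAt_pow 2 x).const_mul (σ ^ 2)
  have hne : σ ^ 2 * x ^ 2 ≠ 0 := mul_ne_zero (pow_ne_zero 2 (ne_of_gt hσ)) (pow_ne_zero 2 hx)
  have h := (hasDerivAt_const x (6 * η ^ 2)).div hd hne
  convert h using 1
  · rfl
  · rfl
  · rfl
  field_simp
  ring

private lemma u_hasDeriv2 (σ η : ℝ) (x : ℝ) (hσ : 0 < σ) (hx : x ≠ 0) :
    HasDerivAt (fun z : ℝ => -12 * η ^ 2 / (σ ^ 2 * z ^ 3)) (36 * η ^ 2 / (σ ^ 2 * x ^ 4)) x := by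
  have hd : HasDerivAt (fun z : ℝ => σ ^ 2 * z ^ 3) (σ ^ 2 * (3 * x ^ 2)) x := by
    simpa using (hasDerivAt_pow 3 x).const_mul (σ ^ 2)
  have hne : σ ^ 2 * x ^ 3 ≠ 0 := mul_ne_zero (pow_ne_zero 2 (ne_of_gt hσ)) (pow_ne_zero 3 hx)
  have h := (hasDerivAt_const x (-12 * η ^ 2)).div hd hne
  convert h using 1
  · rfl
  · rfl
  · rfl
  field_simp
  ring

/-- cf. Proposition 21 of Lalley–Shao / Dynkin: for `σ, η > 0`,
the function `u(x) = 6η²/(σ²x²)` is the unique nonnegative, twice continuously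
differentiable solution on `(0,∞)` of `u'' = (σ²/η²)u²` with `u(0+) = ∞` and
`u(∞) = 0`. -/
theorem sbm_max_ode_unique (σ η : ℝ) (hσ : 0 < σ) (hη : 0 < η) :
    ((∀ x : ℝ, 0 < x → 0 ≤ 6 * η ^ 2 / (σ ^ 2 * x ^ 2))
      ∧ ContDiffOn ℝ 2 (fun x : ℝ => 6 * η ^ 2 / (σ ^ 2 * x ^ 2)) (Set.Ioi 0)
      ∧ (∀ x : ℝ, 0 < x →
          deriv (deriv (fun z : ℝ => 6 * η ^ 2 / (σ ^ 2 * z ^ 2))) x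
            = (σ ^ 2 / η ^ 2) * (6 * η ^ 2 / (σ ^ 2 * x ^ 2)) ^ 2)
      ∧ Tendsto (fun x : ℝ => 6 * η ^ 2 / (σ ^ 2 * x ^ 2))
          (nhdsWithin 0 (Set.Ioi 0)) atTop
      ∧ Tendsto (fun x : ℝ => 6 * η ^ 2 / (σ ^ 2 * x ^ 2)) atTop (nhds 0))
    ∧ ∀ ψ : ℝ → ℝ,
        (∀ x : ℝ, 0 < x → 0 ≤ ψ x) →
        ContDiffOn ℝ 2 ψ (Set.Ioi 0) →
        (∀ x : ℝ, 0 < x → deriv (deriv ψ) x = (σ ^ 2 / η ^ 2) * (ψ x) ^ 2) →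
        Tendsto ψ (nhdsWithin 0 (Set.Ioi 0)) atTop →
        Tendsto ψ atTop (nhds 0) →
        ∀ x : ℝ, 0 < x → ψ x = 6 * η ^ 2 / (σ ^ 2 * x ^ 2) := by
  have hσ2 : (0:ℝ) < σ ^ 2 := by positivity
  have hη2 : (0:ℝ) < η ^ 2 := by positivity
  refine ⟨⟨?_, ?_, ?_, ?_, ?_⟩, ?_⟩
  · intro x hx
    positivity
  · refine ContDiffOn.div contDiffOn_const ?_ ?_
    · exact (contDiff_const.mul (contDiff_id.pow 2)).contDiffOn
    · intro x hx
      rw [Set.mem_Ioi] at hx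
      positivity
  · intro x hx
    have hev : deriv (fun z : ℝ => 6 * η ^ 2 / (σ ^ 2 * z ^ 2))
        =ᶠ[nhds x] fun z : ℝ => -12 * η ^ 2 / (σ ^ 2 * z ^ 3) := by
      filter_upwards [isOpen_compl_singleton.mem_nhds
        (show x ∈ ({(0:ℝ)}ᶜ : Set ℝ) from hx.ne')] with z hz
      exact (u_hasDeriv σ η z hσ hz).deriv
    rw [hev.deriv_eq, (u_hasDeriv2 σ η x hσ hx.ne').deriv]
    field_simp
    ring
  · have h1 : Tendsto (fun x : ℝ => σ ^ 2 * x ^ 2) (nhdsWithin 0 (Set.Ioi 0))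
        (nhdsWithin 0 (Set.Ioi 0)) := by
      rw [tendsto_nhdsWithin_iff]
      constructor
      · have h : Tendsto (fun x : ℝ => σ ^ 2 * x ^ 2) (nhds 0) (nhds (σ ^ 2 * 0 ^ 2)) :=
          (Continuous.tendsto (by continuity) 0)
        have h' := h.mono_left (nhdsWithin_le_nhds :
          nhdsWithin (0:ℝ) (Set.Ioi 0) ≤ nhds 0)
        simpa using h'
      · filter_upwards [eventually_mem_nhdsWithin] with x hx
        rw [Set.mem_Ioi] at hx ⊢
        positivity
    have h2 := tendsto_inv_nhdsGT_zero.comp h1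
    have h3 := Tendsto.const_mul_atTop (show (0:ℝ) < 6 * η ^ 2 by positivity) h2
    simpa [div_eq_mul_inv, Function.comp] using h3
  · exact tendsto_const_nhds.div_atTop
      (Tendsto.const_mul_atTop hσ2 (tendsto_pow_atTop two_ne_zero))
  · intro ψ hnn hsm hode h0 hinf x hx
    have hc : (0:ℝ) < σ ^ 2 / η ^ 2 := by positivity
    rw [ode_uniq (σ ^ 2 / η ^ 2) hc ψ hnn hsm hode h0 hinf x hx]
    rw [div_eq_div_iff (by positivity) (by positivity)]
    field_simp
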